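/- arXiv:1603.09205 — 2 statements merged into one kernel-verified Lean document; each statement's English description precedes it below -/
import Mathlib

section
/- The map sending each maximal reciprocal pointer chain R to the common cascading via-path p̃_{s,v,t} of its member vertices v is well defined (all vertices of R have the same CVP) and is a bijection from the set Π of maximal RPCs (identified by their vertex sets) onto the set Λ of distinct cascading via-paths. -/
variable {V : Type*}

/-- `p` is a path from `u` to `w` in the digraph with edge relation `E`:
a nonempty finite sequence of vertices beginning at `u` and ending at `w`
in which every consecutive pair of vertices is an edge. -/
def IsPath (E : V → V → Prop) (p : List V) (u w : V) : Prop :=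
  p ≠ [] ∧ p.head? = some u ∧ p.getLast? = some w ∧ p.Chain' E

/-- The cost of a path: the sum of the weights of its edges. -/
def pathCost (c : V → V → ℝ) (p : List V) : ℝ :=
  ((p.zip p.tail).map fun e => c e.1 e.2).sum

/-- A shortest path from `u` to `w`: a path from `u` to `w` of minimum cost. -/
def IsShortestPath (E : V → V → Prop) (c : V → V → ℝ) (p : List V) (u w : V) : Prop :=
  IsPath E p u w ∧ ∀ q, IsPath E q u w → pathCost c p ≤ pathCost c q

/-- A via-path for `v`: an `s`–`t` path of minimum cost among all `s`–`t`
paths passing through `v`. -/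
def IsViaPath (E : V → V → Prop) (c : V → V → ℝ) (s t v : V) (p : List V) : Prop :=
  IsPath E p s t ∧ v ∈ p ∧ ∀ q, IsPath E q s t → v ∈ q → pathCost c p ≤ pathCost c q

/-- The minimum cost of an `s`–`t` path passing through `v`. -/
noncomputable def viaCost (E : V → V → Prop) (c : V → V → ℝ) (s t v : V) : ℝ :=
  sInf (pathCost c '' {p | IsPath E p s t ∧ v ∈ p})

/-- A predecessor shortest path tree rooted at the source `s`: a map `b`
assigning to each vertex `v ≠ s` a vertex `b v` with an edge from `b v` to `v`,
such that iterating `b` from any `v` terminates at `s` and the resulting path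
`pathTo v` (read from `s` to `v`) is a shortest path from `s` to `v`. -/
structure PredSPT (E : V → V → Prop) (c : V → V → ℝ) (s : V) where
  b : V → V
  pathTo : V → List V
  edge : ∀ v, v ≠ s → E (b v) v
  pathTo_src : pathTo s = [s]
  pathTo_step : ∀ v, v ≠ s → pathTo v = pathTo (b v) ++ [v]
  shortest : ∀ v, IsShortestPath E c (pathTo v) s v

/-- A successor shortest path tree rooted at the target `t`: a map `f`
assigning to each vertex `v ≠ t` a vertex `f v` with an edge from `v` to `f v`,
such that iterating `f` from any `v` terminates at `t` and the resulting path
`pathFrom v` is a shortest path from `v` to `t`. -/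
structure SuccSPT (E : V → V → Prop) (c : V → V → ℝ) (t : V) where
  f : V → V
  pathFrom : V → List V
  edge : ∀ v, v ≠ t → E v (f v)
  pathFrom_tgt : pathFrom t = [t]
  pathFrom_step : ∀ v, v ≠ t → pathFrom v = v :: pathFrom (f v)
  shortest : ∀ v, IsShortestPath E c (pathFrom v) v t

variable {E : V → V → Prop} {c : V → V → ℝ} {s t : V}

/-- The cascading via-path (CVP) of a vertex `v`: the tree path `p̃_{s,v}`
followed by the tree path `p̃_{v,t}`. -/
def CVP (B : PredSPT E c s) (F : SuccSPT E c t) (v : V) : List V :=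
  B.pathTo v ++ (F.pathFrom v).tail

/-- A reciprocal pointer chain (RPC): a nonempty sequence of vertices
`(v_1, …, v_n)` such that for all `1 ≤ i < n`, `b (v_{i+1}) = v_i` and
`f (v_i) = v_{i+1}` (as pointers of the two shortest path trees, so in
particular `v_{i+1} ≠ s` and `v_i ≠ t`). -/
def IsRPC (B : PredSPT E c s) (F : SuccSPT E c t) (r : List V) : Prop :=
  r ≠ [] ∧ r.Chain' fun x y => y ≠ s ∧ x ≠ t ∧ B.b y = x ∧ F.f x = y

/-- A maximal RPC: an RPC whose set of vertices is not a (strict) subset of the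
vertex set of any other RPC. -/
def IsMaximalRPC [DecidableEq V] (B : PredSPT E c s) (F : SuccSPT E c t)
    (r : List V) : Prop :=
  IsRPC B F r ∧
    ∀ r', IsRPC B F r' → r.toFinset ⊆ r'.toFinset → r'.toFinset = r.toFinset

/-- The Jaccard distance between the vertex sets of two paths. -/
noncomputable def jaccardDist [DecidableEq V] (p q : List V) : ℝ :=
  1 - ((p.toFinset ∩ q.toFinset).card : ℝ) / ((p.toFinset ∪ q.toFinset).card : ℝ)

/-- A plateau: a nonempty sequence of vertices in which every consecutive pair
is an edge and all vertices have the same minimum via-path cost. -/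
def IsPlateau (E : V → V → Prop) (c : V → V → ℝ) (s t : V) (q : List V) : Prop :=
  q ≠ [] ∧ q.Chain' fun x y => E x y ∧ viaCost E c s t x = viaCost E c s t y

/-- A maximal plateau: a plateau whose set of vertices is not a (strict) subset
of the vertex set of any other plateau. -/
def IsMaximalPlateau [DecidableEq V] (E : V → V → Prop) (c : V → V → ℝ)
    (s t : V) (q : List V) : Prop :=
  IsPlateau E c s t q ∧
    ∀ q', IsPlateau E c s t q' → q.toFinset ⊆ q'.toFinset → q'.toFinset = q.toFinset

section Aux
variable (B : PredSPT E c s) (F : SuccSPT E c t)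

lemma pathTo_ne (v : V) : B.pathTo v ≠ [] := (B.shortest v).1.1
lemma pathFrom_ne (v : V) : F.pathFrom v ≠ [] := (F.shortest v).1.1
lemma pathTo_getLast? (v : V) : (B.pathTo v).getLast? = some v := (B.shortest v).1.2.2.1
lemma pathFrom_head? (v : V) : (F.pathFrom v).head? = some v := (F.shortest v).1.2.1

lemma pathFrom_cons (v : V) : F.pathFrom v = v :: (F.pathFrom v).tail := by
  have h := pathFrom_head? F v
  cases hl : F.pathFrom v with
  | nil => exact absurd hl (pathFrom_ne F v)
  | cons a l => rw [hl] at h; simp at h; simp [h]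

lemma pathTo_pos (v : V) : 1 ≤ (B.pathTo v).length :=
  List.length_pos_iff.2 (pathTo_ne B v)

/-- position of v on its CVP -/
lemma cvp_take (v : V) : (CVP B F v).take (B.pathTo v).length = B.pathTo v :=
  List.take_left

lemma cvp_drop (v : V) : (CVP B F v).drop (B.pathTo v).length = (F.pathFrom v).tail :=
  List.drop_left

/-- equal CVP and equal position implies equal vertex -/
lemma eq_of_cvp_pos {u v : V} (hc : CVP B F u = CVP B F v)
    (hp : (B.pathTo u).length = (B.pathTo v).length) : u = v := by
  have h1 : B.pathTo u = B.pathTo v := by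
    rw [← cvp_take B F u, ← cvp_take B F v, hc, hp]
  have := pathTo_getLast? B u
  rw [h1, pathTo_getLast? B v] at this
  exact (Option.some_injective _ this).symm

lemma length_pathTo_le (v : V) : (B.pathTo v).length ≤ (CVP B F v).length := by
  unfold CVP; simp

/-- descent along predecessor pointers: prefixes of p of every intermediate
length are pathTo's. -/
lemma descend (p : List V) : ∀ (d k : ℕ) (y : V), B.pathTo y = p.take k →
    k ≤ p.length → 1 ≤ k - d → ∃ z, B.pathTo z = p.take (k - d) := by
  intro d
  induction d with
  | zero => intro k y hy _ _; exact ⟨y, by simpa using hy⟩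
  | succ d ih =>
    intro k y hy hk hkd
    have hk2 : 2 + d ≤ k := by omega
    have hlen : (B.pathTo y).length = k := by
      rw [hy, List.length_take]; omega
    have hys : y ≠ s := by
      intro h; rw [h, B.pathTo_src] at hlen; simp at hlen; omega
    have hstep := B.pathTo_step y hys
    have hlen' : (B.pathTo (B.b y)).length = k - 1 := by
      rw [hstep] at hlen; simp at hlen; omega
    have hby : B.pathTo (B.b y) = p.take (k - 1) := by
      have h1 : (B.pathTo (B.b y) ++ [y]).take (k-1) = B.pathTo (B.b y) :=
        List.take_left' hlen'
      rw [← hstep, hy, List.take_take, min_eq_left (by omega : k - 1 ≤ k)] at h1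
      exact h1.symm
    have := ih (k-1) (B.b y) hby (by omega) (by omega)
    have he : k - 1 - d = k - (d + 1) := by omega
    rwa [he] at this

/-- The key step lemma. -/
lemma step_lemma {u v : V} (hcv : CVP B F u = CVP B F v)
    (hlt : (B.pathTo u).length < (B.pathTo v).length) :
    (F.f u ≠ s ∧ u ≠ t ∧ B.b (F.f u) = u ∧ F.f u = F.f u) ∧
    CVP B F (F.f u) = CVP B F u ∧
    (B.pathTo (F.f u)).length = (B.pathTo u).length + 1 := by
  have hjp : (B.pathTo v).length ≤ (CVP B F u).length := by
    rw [hcv]; exact length_pathTo_le B F v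
  have hip : (B.pathTo u).length < (CVP B F u).length := lt_of_lt_of_le hlt hjp
  have htail : (CVP B F u).length =
      (B.pathTo u).length + (F.pathFrom u).tail.length := by
    unfold CVP; simp
  have hut : u ≠ t := by
    intro h
    subst h
    rw [F.pathFrom_tgt] at htail
    simp at htail
    omega
  have hstepF := F.pathFrom_step u hut
  have htailw : (F.pathFrom u).tail = F.pathFrom (F.f u) := by rw [hstepF]; rfl
  have hdrop : (CVP B F u).drop (B.pathTo u).length = F.pathFrom (F.f u) := by
    rw [← htailw]; exact cvp_drop B F u
  have hget : (CVP B F u)[(B.pathTo u).length]? = some (F.f u) := by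
    rw [← List.head?_drop, hdrop]; exact pathFrom_head? F (F.f u)
  have hpv : B.pathTo v = (CVP B F u).take (B.pathTo v).length := by
    rw [hcv]; exact (cvp_take B F v).symm
  obtain ⟨z, hz⟩ := descend B (CVP B F u) ((B.pathTo v).length - ((B.pathTo u).length + 1))
    (B.pathTo v).length v hpv hjp (by omega)
  have hji : (B.pathTo v).length - ((B.pathTo v).length - ((B.pathTo u).length + 1))
      = (B.pathTo u).length + 1 := by omega
  rw [hji] at hz
  have htake : (CVP B F u).take ((B.pathTo u).length + 1) = B.pathTo u ++ [F.f u] := by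
    rw [List.take_succ, hget, cvp_take B F u]
    rfl
  have hzw : z = F.f u := by
    have h1 := pathTo_getLast? B z
    rw [hz, htake, List.getLast?_concat] at h1
    exact (Option.some_injective _ h1).symm
  rw [hzw] at hz
  have hpw : B.pathTo (F.f u) = B.pathTo u ++ [F.f u] := by rw [hz, htake]
  have hlenw : (B.pathTo (F.f u)).length = (B.pathTo u).length + 1 := by
    rw [hpw]; simp
  have hws : F.f u ≠ s := by
    intro h; rw [h, B.pathTo_src] at hlenw
    simp only [List.length_singleton] at hlenw
    have := pathTo_pos B u; omega
  have hbw : B.b (F.f u) = u := by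
    have hstep := B.pathTo_step (F.f u) hws
    have h2 : B.pathTo (B.b (F.f u)) ++ [F.f u] = B.pathTo u ++ [F.f u] := by
      rw [← hstep, hpw]
    have h3 : B.pathTo (B.b (F.f u)) = B.pathTo u := List.append_inj_left' h2 rfl
    have h4 := pathTo_getLast? B (B.b (F.f u))
    rw [h3, pathTo_getLast? B u] at h4
    exact (Option.some_injective _ h4).symm
  refine ⟨⟨hws, hut, hbw, rfl⟩, ?_, hlenw⟩
  show B.pathTo (F.f u) ++ (F.pathFrom (F.f u)).tail = CVP B F u
  rw [hpw]
  have h5 : [F.f u] ++ (F.pathFrom (F.f u)).tail = F.pathFrom (F.f u) := by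
    conv_rhs => rw [pathFrom_cons F (F.f u)]
    rfl
  rw [List.append_assoc, h5, ← hdrop]
  conv_rhs => rw [← List.take_append_drop (B.pathTo u).length (CVP B F u)]
  rw [cvp_take B F u]

end Aux


section Aux2
variable (B : PredSPT E c s) (F : SuccSPT E c t)

lemma cvp_adj {x y : V} (hys : y ≠ s) (hxt : x ≠ t) (hb : B.b y = x)
    (hf : F.f x = y) : CVP B F x = CVP B F y := by
  have h1 : F.pathFrom x = x :: F.pathFrom y := by
    rw [F.pathFrom_step x hxt, hf]
  have h2 : B.pathTo y = B.pathTo x ++ [y] := by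
    rw [B.pathTo_step y hys, hb]
  show B.pathTo x ++ (F.pathFrom x).tail = B.pathTo y ++ (F.pathFrom y).tail
  rw [h1, h2, List.append_assoc]
  congr 1
  conv_lhs => rw [pathFrom_cons F y]
  rfl

lemma chain_cvp : ∀ (l : List V) (a : V),
    (a :: l).Chain' (fun x y => y ≠ s ∧ x ≠ t ∧ B.b y = x ∧ F.f x = y) →
    ∀ x ∈ a :: l, CVP B F x = CVP B F a := by
  intro l
  induction l with
  | nil => intro a _ x hx; simp at hx; rw [hx]
  | cons b l ih =>
    intro a hch x hx
    rw [List.Chain', List.isChain_cons_cons] at hch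
    obtain ⟨⟨h1, h2, h3, h4⟩, hch'⟩ := hch
    have hab : CVP B F b = CVP B F a := (cvp_adj B F h1 h2 h3 h4).symm
    rcases List.mem_cons.1 hx with h | h
    · rw [h]
    · rw [ih b hch' x h, hab]

lemma rpc_cvp_eq {r : List V} (hr : IsRPC B F r) :
    ∀ u ∈ r, ∀ v ∈ r, CVP B F u = CVP B F v := by
  obtain ⟨hne, hch⟩ := hr
  cases r with
  | nil => exact absurd rfl hne
  | cons a l =>
    intro u hu v hv
    rw [chain_cvp B F l a hch u hu, chain_cvp B F l a hch v hv]

lemma key_rpc : ∀ (d : ℕ) (u v : V), CVP B F u = CVP B F v →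
    (B.pathTo u).length + d = (B.pathTo v).length →
    ∃ r, IsRPC B F r ∧ r.head? = some u ∧ ∀ x, CVP B F x = CVP B F u →
      (B.pathTo u).length ≤ (B.pathTo x).length →
      (B.pathTo x).length ≤ (B.pathTo v).length → x ∈ r := by
  intro d
  induction d with
  | zero =>
    intro u v hcv hd
    refine ⟨[u], ⟨List.cons_ne_nil _ _, List.isChain_singleton _⟩, rfl, ?_⟩
    intro x hx h1 h2
    have : (B.pathTo x).length = (B.pathTo u).length := by omega
    have := eq_of_cvp_pos B F hx this
    simp [this]
  | succ d ih =>
    intro u v hcv hd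
    have hlt : (B.pathTo u).length < (B.pathTo v).length := by omega
    obtain ⟨⟨hws, hut, hbw, _⟩, hcw, hlw⟩ := step_lemma B F hcv hlt
    obtain ⟨r', hr', hhd', hcov'⟩ := ih (F.f u) v (hcw.trans hcv) (by omega)
    cases r' with
    | nil => exact absurd rfl hr'.1
    | cons w l =>
      have hwfu : F.f u = w := by simpa using hhd'.symm
      rw [← hwfu] at hr' hcov'
      refine ⟨u :: F.f u :: l, ⟨List.cons_ne_nil _ _, ?_⟩, rfl, ?_⟩
      · rw [List.Chain', List.isChain_cons_cons]
        exact ⟨⟨hws, hut, hbw, rfl⟩, hr'.2⟩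
      · intro x hx h1 h2
        rcases eq_or_lt_of_le h1 with h | h
        · have := eq_of_cvp_pos B F hx h.symm
          simp [this]
        · have hx' : CVP B F x = CVP B F (F.f u) := hx.trans hcw.symm
          exact List.mem_cons_of_mem u (hcov' x hx' (by omega) h2)

end Aux2

section Aux3
variable [Fintype V] [DecidableEq V] (B : PredSPT E c s) (F : SuccSPT E c t)

lemma exists_maximal_rpc (v : V) : ∃ r, IsMaximalRPC B F r ∧ v ∈ r := by
  classical
  set P : ℕ → Prop := fun n => ∃ r, IsRPC B F r ∧ v ∈ r ∧ r.toFinset.card = n with hP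
  have h1 : P 1 := ⟨[v], ⟨List.cons_ne_nil _ _, List.isChain_singleton _⟩,
    List.mem_singleton.2 rfl, by simp⟩
  have hcard : 1 ≤ Fintype.card V := Fintype.card_pos_iff.2 ⟨v⟩
  have hspec : P (Nat.findGreatest P (Fintype.card V)) :=
    Nat.findGreatest_spec hcard h1
  obtain ⟨r, hrpc, hv, hc⟩ := hspec
  refine ⟨r, ⟨hrpc, ?_⟩, hv⟩
  intro r' hr' hsub
  have hv' : v ∈ r' := List.mem_toFinset.1 (hsub (List.mem_toFinset.2 hv))
  have hle : r'.toFinset.card ≤ Fintype.card V := by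
    simpa using Finset.card_le_univ r'.toFinset
  have hP' : P r'.toFinset.card := ⟨r', hr', hv', rfl⟩
  have hle2 : r'.toFinset.card ≤ r.toFinset.card := by
    rw [hc]
    by_contra h
    exact Nat.findGreatest_is_greatest (by omega) hle hP'
  exact (Finset.eq_of_subset_of_card_le hsub hle2).symm

theorem aux_main
    (B : PredSPT E c s) (F : SuccSPT E c t) :
    (∀ r, IsMaximalRPC B F r → ∀ u ∈ r, ∀ v ∈ r, CVP B F u = CVP B F v) ∧
    ∃ g : Finset V → List V,
      (∀ r, IsMaximalRPC B F r → ∀ v ∈ r, g r.toFinset = CVP B F v) ∧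
      Set.BijOn g {S | ∃ r, IsMaximalRPC B F r ∧ S = r.toFinset}
        {p | ∃ v, p = CVP B F v} := by
  classical
  have part1 : ∀ r, IsMaximalRPC B F r → ∀ u ∈ r, ∀ v ∈ r, CVP B F u = CVP B F v :=
    fun r hr => rpc_cvp_eq B F hr.1
  refine ⟨part1, ?_⟩
  set g : Finset V → List V :=
    fun S => if h : S.Nonempty then CVP B F h.choose else [] with hg
  have gspec : ∀ r, IsMaximalRPC B F r → ∀ v ∈ r, g r.toFinset = CVP B F v := by
    intro r hr v hv
    have hne : r.toFinset.Nonempty := ⟨v, List.mem_toFinset.2 hv⟩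
    rw [hg]
    simp only [dif_pos hne]
    exact part1 r hr _ (List.mem_toFinset.1 hne.choose_spec) v hv
  refine ⟨g, gspec, ?_, ?_, ?_⟩
  · -- MapsTo
    rintro S ⟨r, hr, rfl⟩
    obtain ⟨v, hv⟩ := List.exists_mem_of_ne_nil r hr.1.1
    exact ⟨v, gspec r hr v hv⟩
  · -- InjOn
    rintro S1 ⟨r1, hr1, rfl⟩ S2 ⟨r2, hr2, rfl⟩ hgeq
    obtain ⟨u1, hu1⟩ := List.exists_mem_of_ne_nil r1 hr1.1.1
    obtain ⟨u2, hu2⟩ := List.exists_mem_of_ne_nil r2 hr2.1.1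
    have hcvp12 : CVP B F u1 = CVP B F u2 := by
      rw [← gspec r1 hr1 u1 hu1, ← gspec r2 hr2 u2 hu2, hgeq]
    have hall : ∀ x ∈ (r1 ++ r2).toFinset, CVP B F x = CVP B F u1 := by
      intro x hx
      rcases List.mem_append.1 (List.mem_toFinset.1 hx) with h | h
      · exact part1 r1 hr1 x h u1 hu1
      · exact (part1 r2 hr2 x h u2 hu2).trans hcvp12.symm
    have hne12 : ((r1 ++ r2).toFinset).Nonempty :=
      ⟨u1, List.mem_toFinset.2 (List.mem_append.2 (Or.inl hu1))⟩
    obtain ⟨umin, hmin, hminle⟩ := Finset.exists_min_image (r1 ++ r2).toFinset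
      (fun x => (B.pathTo x).length) hne12
    obtain ⟨umax, hmax, hmaxge⟩ := Finset.exists_max_image (r1 ++ r2).toFinset
      (fun x => (B.pathTo x).length) hne12
    have hcv : CVP B F umin = CVP B F umax := by
      rw [hall umin hmin, hall umax hmax]
    have hle : (B.pathTo umin).length ≤ (B.pathTo umax).length := hminle umax hmax
    obtain ⟨r, hrpc, _, hcov⟩ := key_rpc B F
      ((B.pathTo umax).length - (B.pathTo umin).length) umin umax hcv (by omega)
    have hsub : ∀ (r' : List V), IsMaximalRPC B F r' →
        (∀ x ∈ r', x ∈ (r1 ++ r2).toFinset) → r.toFinset = r'.toFinset := by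
      intro r' hr' hmem
      refine hr'.2 r hrpc ?_
      intro x hx
      have hx' : x ∈ r' := List.mem_toFinset.1 hx
      have hxm := hmem x hx'
      refine List.mem_toFinset.2 (hcov x ?_ (hminle x hxm) (hmaxge x hxm))
      rw [hall x hxm, hall umin hmin]
    have h1 := hsub r1 hr1 (fun x hx => List.mem_toFinset.2 (List.mem_append.2 (Or.inl hx)))
    have h2 := hsub r2 hr2 (fun x hx => List.mem_toFinset.2 (List.mem_append.2 (Or.inr hx)))
    rw [← h1, ← h2]
  · -- SurjOn
    rintro p ⟨v, rfl⟩
    obtain ⟨r, hr, hv⟩ := exists_maximal_rpc B F v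
    exact ⟨r.toFinset, ⟨r, hr, rfl⟩, gspec r hr v hv⟩

end Aux3

/-- The map sending each maximal RPC (identified by its vertex set)
to the common CVP of its member vertices is well defined and is a bijection from
the set Π of maximal RPC vertex sets onto the set Λ of distinct CVPs. -/
theorem maximal_rpc_cvp_bijection [Fintype V] [DecidableEq V]
    {E : V → V → Prop} {c : V → V → ℝ} {s t : V}
    (hc : ∀ u w, E u w → 0 ≤ c u w)
    (B : PredSPT E c s) (F : SuccSPT E c t) :
    (∀ r, IsMaximalRPC B F r → ∀ u ∈ r, ∀ v ∈ r, CVP B F u = CVP B F v) ∧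
    ∃ g : Finset V → List V,
      (∀ r, IsMaximalRPC B F r → ∀ v ∈ r, g r.toFinset = CVP B F v) ∧
      Set.BijOn g {S | ∃ r, IsMaximalRPC B F r ∧ S = r.toFinset}
        {p | ∃ v, p = CVP B F v} := by
  exact aux_main B F
end

section
/- If a vertex u lies on some shortest path from s to v or on some shortest path from v to t, then c(p_{s,u,t}) ≤ c(p_{s,v,t}), i.e., the minimum cost of an s–t path passing through u is at most the minimum cost of an s–t path passing through v. -/
variable {V : Type*}

variable {E : V → V → Prop} {c : V → V → ℝ} {s t : V}

lemma pathCost_single (x : V) : pathCost c [x] = 0 := rfl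

lemma pathCost_cons_cons (x y : V) (l : List V) :
    pathCost c (x :: y :: l) = c x y + pathCost c (y :: l) := by
  simp [pathCost]

lemma pathCost_split (a : List V) (x : V) (b : List V) :
    pathCost c (a ++ x :: b) = pathCost c (a ++ [x]) + pathCost c (x :: b) := by
  induction a with
  | nil => simp [pathCost_single]
  | cons y a' ih =>
    cases a' with
    | nil => simp [pathCost_cons_cons, pathCost_single]
    | cons z a'' =>
      simp only [List.cons_append, pathCost_cons_cons] at *
      rw [ih]; ring

lemma pathCost_nonneg (hc : ∀ u w, E u w → 0 ≤ c u w) :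
    ∀ {p : List V}, p.Chain' E → 0 ≤ pathCost c p := by
  intro p
  induction p with
  | nil => intro _; simp [pathCost]
  | cons x l ih =>
    cases l with
    | nil => intro _; simp [pathCost_single]
    | cons y l' =>
      intro h
      simp only [List.Chain', List.isChain_cons_cons] at h
      rw [pathCost_cons_cons]
      exact add_nonneg (hc _ _ h.1) (ih h.2)

lemma head?_append_cons (l : List V) (x : V) (r : List V) :
    (l ++ x :: r).head? = (l ++ [x]).head? := by cases l <;> simp

lemma path_glue {l r : List V} {a b v : V}
    (h1 : IsPath E (l ++ [v]) a v) (h2 : IsPath E (v :: r) v b) :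
    IsPath E (l ++ v :: r) a b := by
  obtain ⟨-, h1h, -, h1c⟩ := h1
  obtain ⟨-, -, h2l, h2c⟩ := h2
  refine ⟨by simp, ?_, ?_, ?_⟩
  · rw [head?_append_cons]; exact h1h
  · rw [List.getLast?_append_cons]; exact h2l
  · simp only [List.Chain', List.isChain_append] at h1c
    have : l ++ v :: r = l ++ ([v] ++ r) := by simp
    rw [this, ← List.append_assoc]
    refine List.IsChain.append (h1c.1.append (by simp) h1c.2.2) h2c.tail ?_
    intro x hx y hy
    rw [List.getLast?_append_of_ne_nil _ (by simp)] at hx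
    simp at hx
    subst hx
    rcases List.isChain_cons.1 h2c with ⟨h, -⟩
    exact h y hy

lemma path_concat {p q : List V} {a b v : V}
    (hp : IsPath E p a v) (hq : IsPath E q v b) :
    IsPath E (p ++ q.tail) a b ∧
      pathCost c (p ++ q.tail) = pathCost c p + pathCost c q := by
  obtain ⟨hpne, hph, hpl, hpc⟩ := hp
  obtain ⟨hqne, hqh, hql, hqc⟩ := hq
  have hq' : q = v :: q.tail := by
    cases q with
    | nil => exact absurd rfl hqne
    | cons z l => simp_all
  have hp' : p.dropLast ++ [v] = p := List.dropLast_append_getLast? _ hpl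
  have key : p ++ q.tail = p.dropLast ++ v :: q.tail := by
    rw [← hp']; simp
  constructor
  · rw [key]
    exact path_glue (by rw [hp']; exact ⟨hpne, hph, hpl, hpc⟩)
      (by rw [← hq']; exact ⟨hqne, hqh, hql, hqc⟩)
  · rw [key, pathCost_split, hp', ← hq']

lemma path_split {q : List V} {a b v : V} (hq : IsPath E q a b) (hv : v ∈ q) :
    ∃ l r, q = l ++ v :: r ∧ IsPath E (l ++ [v]) a v ∧ IsPath E (v :: r) v b := by
  obtain ⟨hqne, hqh, hql, hqc⟩ := hq
  obtain ⟨l, r, rfl⟩ := List.append_of_mem hv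
  refine ⟨l, r, rfl, ⟨by simp, ?_, by simp, ?_⟩, ⟨by simp, rfl, ?_, ?_⟩⟩
  · rw [← head?_append_cons]; exact hqh
  · have : l ++ v :: r = (l ++ [v]) ++ r := by simp
    rw [this] at hqc
    exact hqc.left_of_append
  · rw [← List.getLast?_append_cons l]; exact hql
  · have : l ++ v :: r = l ++ ([v] ++ r) := by simp
    rw [this, ← List.append_assoc] at hqc
    rcases List.isChain_append.1 hqc with ⟨c1, c2, h⟩
    simp only [List.Chain', List.isChain_cons]
    refine ⟨?_, c2⟩
    intro y hy
    exact h v (by rw [List.getLast?_append_of_ne_nil _ (by simp)]; simp) y hy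

/-- If a vertex `u` lies on some shortest path from `s` to `v` or
on some shortest path from `v` to `t`, then the minimum cost of an `s`–`t` path
passing through `u` is at most the minimum cost of an `s`–`t` path passing
through `v`. -/
theorem via_cost_decreases_along_shortest [Fintype V]
    {E : V → V → Prop} {c : V → V → ℝ} {s t : V}
    (hc : ∀ u w, E u w → 0 ≤ c u w)
    (hreach : ∀ v : V, ∃ p, IsPath E p s v)
    (hcoreach : ∀ v : V, ∃ p, IsPath E p v t)
    (u v : V)
    (h : (∃ p, IsShortestPath E c p s v ∧ u ∈ p) ∨
         (∃ p, IsShortestPath E c p v t ∧ u ∈ p)) :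
    viaCost E c s t u ≤ viaCost E c s t v := by
  have hbdd : ∀ w : V, BddBelow (pathCost c '' {p | IsPath E p s t ∧ w ∈ p}) := by
    intro w
    refine ⟨0, ?_⟩
    rintro x ⟨q, ⟨hq, -⟩, rfl⟩
    exact pathCost_nonneg hc hq.2.2.2
  have hne : (pathCost c '' {p | IsPath E p s t ∧ v ∈ p}).Nonempty := by
    obtain ⟨p1, hp1⟩ := hreach v
    obtain ⟨p2, hp2⟩ := hcoreach v
    obtain ⟨hpath, -⟩ := path_concat (c := c) hp1 hp2
    have hv1 : v ∈ p1 := by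
      have := List.dropLast_append_getLast? v hp1.2.2.1
      rw [← this]; simp
    exact ⟨_, ⟨p1 ++ p2.tail, ⟨hpath, by simp [hv1]⟩, rfl⟩⟩
  refine le_csInf hne ?_
  rintro x ⟨q, ⟨hq, hvq⟩, rfl⟩
  obtain ⟨l, r, heq, hqa, hqb⟩ := path_split hq hvq
  have hsplit : pathCost c q = pathCost c (l ++ [v]) + pathCost c (v :: r) := by
    rw [heq, pathCost_split]
  have step : ∃ rr, IsPath E rr s t ∧ u ∈ rr ∧ pathCost c rr ≤ pathCost c q := by
    rcases h with ⟨p, ⟨hp, hps⟩, hup⟩ | ⟨p, ⟨hp, hps⟩, hup⟩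
    · obtain ⟨hpath, hcost⟩ := path_concat (c := c) hp hqb
      refine ⟨p ++ (v :: r).tail, hpath, by simp [hup], ?_⟩
      have h1 : pathCost c p ≤ pathCost c (l ++ [v]) := hps _ hqa
      rw [hcost, hsplit]
      linarith
    · obtain ⟨hpath, hcost⟩ := path_concat (c := c) hqa hp
      have hp' : p = v :: p.tail := by
        obtain ⟨hne, hh, -, -⟩ := hp
        cases p with
        | nil => exact absurd rfl hne
        | cons z l' => simp_all
      refine ⟨(l ++ [v]) ++ p.tail, hpath, ?_, ?_⟩
      · rw [hp'] at hup
        rcases List.mem_cons.1 hup with rfl | hup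
        · simp
        · simp [hup]
      · have h1 : pathCost c p ≤ pathCost c (v :: r) := hps _ hqb
        rw [hcost, hsplit]
        linarith
  obtain ⟨rr, hrr, hur, hcost⟩ := step
  exact le_trans (csInf_le (hbdd u) ⟨rr, ⟨hrr, hur⟩, rfl⟩) hcost
end
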